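/- Let G be a finite group, S = {x ∈ R[G] : Σ_g x_g = 1, x_g ≥ 0} the natural simplex, and x ∈ S. Let n_x = min{k ∈ ℕ : the coefficient of the identity e in x^k is nonzero}. Then the elements e, x, x², ..., x^{n_x - 1} are linearly independent in R[G]. -/

import Mathlib

open Filter Topology

/-- For `x` in the simplex `S` of the real group algebra of a finite group `G`, with
`n_x = min{k ≥ 1 : (x^k)_e ≠ 0}`, the elements `e, x, x², …, x^{n_x - 1}` are
linearly independent. -/
theorem stmt4 {G : Type*} [Group G] [Fintype G]
    (x : MonoidAlgebra ℝ G) (hx1 : ∑ g : G, x.coeff g = 1) (hx0 : ∀ g, 0 ≤ x.coeff g)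
    (n : ℕ) (hn : IsLeast {k : ℕ | 0 < k ∧ (x ^ k).coeff (1 : G) ≠ 0} n) :
    LinearIndependent ℝ (fun i : Fin n => x ^ (i : ℕ)) := by
  rw [Fintype.linearIndependent_iff]
  intro g hg
  have hmin : ∀ k, 0 < k → k < n → (x ^ k).coeff (1 : G) = 0 := by
    intro k hk hkn
    by_contra h
    exact absurd (hn.2 ⟨hk, h⟩) (by omega)
  have key : ∀ m : Fin n, (∀ i : Fin n, m < i → g i = 0) → g m = 0 := by
    intro m hm
    have h0 : (∑ i : Fin n, g i • x ^ (i : ℕ)) * x ^ (n - m.val) = 0 := by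
      rw [hg, zero_mul]
    rw [Finset.sum_mul] at h0
    simp only [smul_mul_assoc, ← pow_add] at h0
    have h1 := congrArg (fun f : MonoidAlgebra ℝ G => f.coeff (1 : G)) h0
    rw [MonoidAlgebra.coeff_sum, Finset.sum_apply'] at h1
    simp only [MonoidAlgebra.coeff_zero, Finsupp.zero_apply] at h1
    rw [Finset.sum_eq_single m] at h1
    · have hexp : (m : ℕ) + (n - m.val) = n := by have := m.isLt; omega
      rw [hexp, MonoidAlgebra.coeff_smul_apply, smul_eq_mul] at h1
      exact (mul_eq_zero.mp h1).resolve_right hn.1.2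
    · intro i _ hi
      rcases lt_or_gt_of_ne hi with h | h
      · have hi' : (i : ℕ) < m.val := h
        rw [MonoidAlgebra.coeff_smul_apply, hmin ((i : ℕ) + (n - m.val)) (by have := m.isLt; omega)
          (by have := m.isLt; omega), smul_zero]
      · rw [hm i h, zero_smul, MonoidAlgebra.coeff_zero, Finsupp.zero_apply]
    · intro h; exact absurd (Finset.mem_univ m) h
  intro m
  have main : ∀ k, ∀ m : Fin n, n - 1 - m.val ≤ k → g m = 0 := by
    intro k
    induction k with
    | zero =>
      intro m hm
      exact key m (fun i hi => by
        have h1 := i.isLt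
        have h2 : (m : ℕ) < (i : ℕ) := hi
        omega)
    | succ k ih =>
      intro m hm
      exact key m (fun i hi => ih i (by
        have h1 := i.isLt
        have h2 : (m : ℕ) < (i : ℕ) := hi
        omega))
  exact main (n - 1) m (by omega)
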